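/- If 𝒫 is an admissible, linearly repetitive set of abstract patterns in ℝ^d, then the tiling space Ω(𝒫) is compact with respect to the metric d. -/

import Mathlib

open Metric Set Filter MeasureTheory Topology

noncomputable section

/-- Points of `ℝ^d`. -/
abbrev Pt (d : ℕ) := EuclideanSpace ℝ (Fin d)

variable (d : ℕ)

/-- A tile: a subset of `ℝ^d` homeomorphic to the closed unit ball. -/
def IsTile (m : Set (Pt d)) : Prop :=
  Nonempty (m ≃ₜ (Metric.closedBall (0 : Pt d) 1))

/-- A pattern: a finite nonempty collection of tiles whose interiors are pairwise disjoint. -/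
def IsPattern (M : Set (Set (Pt d))) : Prop :=
  M.Finite ∧ M.Nonempty ∧ (∀ m ∈ M, IsTile d m) ∧
    M.Pairwise fun m m' => interior m ∩ interior m' = ∅

/-- A tiling of `ℝ^d`: a collection of tiles with pairwise disjoint interiors covering `ℝ^d`. -/
def IsTiling (T : Set (Set (Pt d))) : Prop :=
  (∀ m ∈ T, IsTile d m) ∧
    (T.Pairwise fun m m' => interior m ∩ interior m' = ∅) ∧ ⋃₀ T = Set.univ

/-- Translation of a pattern by `t`. -/
def patTrans (t : Pt d) (M : Set (Set (Pt d))) : Set (Set (Pt d)) :=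
  (fun m => (fun x => x + t) '' m) '' M

/-- Support (underlying set) of a pattern. -/
def supp (M : Set (Set (Pt d))) : Set (Pt d) := ⋃₀ M

/-- Inner radius: the largest `r` such that some closed ball of radius `r` fits inside `s(M)`. -/
def rIn (M : Set (Set (Pt d))) : ℝ :=
  sSup {r : ℝ | ∃ x : Pt d, Metric.closedBall x r ⊆ supp d M}

/-- Outer radius: the smallest `r` such that some closed ball of radius `r` contains `s(M)`. -/
def rOut (M : Set (Set (Pt d))) : ℝ :=
  sInf {r : ℝ | ∃ x : Pt d, supp d M ⊆ Metric.closedBall x r}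

/-- The pattern class of `P` is a subpattern of (the class of) `Q`:
some translate of `P` is contained in `Q`. -/
def SubpatternClass (P Q : Set (Set (Pt d))) : Prop :=
  ∃ t : Pt d, patTrans d t P ⊆ Q

/-- A set of abstract patterns is modelled as a translation-closed set `Ps` of concrete
patterns (the union of the pattern classes).  `Admissible` encodes conditions
(i)–(iii) of Definition 2.1. -/
structure Admissible (Ps : Set (Set (Set (Pt d)))) : Prop where
  pattern : ∀ P ∈ Ps, IsPattern d P
  transClosed : ∀ (t : Pt d), ∀ P ∈ Ps, patTrans d t P ∈ Ps
  subClosed : ∀ P ∈ Ps, ∀ Q : Set (Set (Pt d)), IsPattern d Q → Q ⊆ P → Q ∈ Ps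
  tileBounds : ∃ rmin rmax : ℝ, 0 < rmin ∧ rmin ≤ rmax ∧
    ∀ m : Set (Pt d), ({m} : Set (Set (Pt d))) ∈ Ps →
      rmin ≤ rIn d {m} ∧ rIn d {m} ≤ rOut d {m} ∧ rOut d {m} ≤ rmax
  extend : ∀ P ∈ Ps, (0 : Pt d) ∈ supp d P → ∀ r : ℝ, 0 < r →
    ∃ Q ∈ Ps, P ⊆ Q ∧ Metric.closedBall (0 : Pt d) r ⊆ supp d Q

/-- Linear repetitivity of a (translation-closed) set of patterns. -/
def LinearlyRepetitive (Ps : Set (Set (Set (Pt d)))) : Prop :=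
  ∃ c : ℝ, 0 < c ∧ ∀ P ∈ Ps, 1 ≤ rOut d P →
    ∀ Q ∈ Ps, c * rOut d P ≤ rIn d Q → SubpatternClass d P Q

/-- The box determined by corner functions `a b : Fin d → ℝ`. -/
def boxSet (a b : Fin d → ℝ) : Set (Pt d) := {x | ∀ j, x j ∈ Set.Icc (a j) (b j)}

/-- `B` is a box. -/
def IsBox (B : Set (Pt d)) : Prop :=
  ∃ a b : Fin d → ℝ, (∀ j, a j < b j) ∧ B = boxSet d a b

/-- `B` is an `r`-box: all side lengths lie in `[r, 2r]`. -/
def IsRBox (r : ℝ) (B : Set (Pt d)) : Prop :=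
  ∃ a b : Fin d → ℝ, (∀ j, a j < b j) ∧ B = boxSet d a b ∧
    ∀ j, r ≤ b j - a j ∧ b j - a j ≤ 2 * r

/-- Width of a box: the minimum of its side lengths. -/
def widthOf (B : Set (Pt d)) : ℝ :=
  ⨅ j : Fin d, (sSup ((fun x : Pt d => x j) '' B) - sInf ((fun x : Pt d => x j) '' B))

/-- Volume of a subset of `ℝ^d`. -/
def volOf (B : Set (Pt d)) : ℝ := (volume B).toReal

/-- Restriction `M ∩ B` of a pattern or tiling `M` to `B`. -/
def patRestrict (M : Set (Set (Pt d))) (B : Set (Pt d)) : Set (Set (Pt d)) :=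
  {s | ∃ m ∈ M, (m ∩ interior B).Nonempty ∧ s = m ∩ B}

/-- The set `Ps_B` of box-patterns derived from `Ps` (concrete representatives). -/
def BoxPatterns (Ps : Set (Set (Set (Pt d)))) : Set (Set (Set (Pt d))) :=
  {Q | ∃ P ∈ Ps, ∃ B : Set (Pt d), IsBox d B ∧ B ⊆ supp d P ∧ Q = patRestrict d P B}

/-- The set `Ps(r)` of `r`-patterns derived from `Ps`. -/
def RPatterns (Ps : Set (Set (Set (Pt d)))) (r : ℝ) : Set (Set (Set (Pt d))) :=
  {Q | ∃ P ∈ Ps, ∃ B : Set (Pt d), IsRBox d r B ∧ B ⊆ supp d P ∧ Q = patRestrict d P B}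

/-- Width of a box-pattern. -/
def patWidth (M : Set (Set (Pt d))) : ℝ := widthOf d (supp d M)

/-- Volume of a box-pattern. -/
def patVol (M : Set (Set (Pt d))) : ℝ := volOf d (supp d M)

/-- A subadditive function on `Ps_B`, with constants `dF, rF` and error function `cF`.
`F` is defined on concrete patterns and is translation-invariant (i.e. well defined on
pattern classes). -/
structure SubadditiveOn (Ps : Set (Set (Set (Pt d)))) (F : Set (Set (Pt d)) → ℝ)
    (dF rF : ℝ) (cF : ℝ → ℝ) : Prop where
  invariant : ∀ (t : Pt d), ∀ M ∈ BoxPatterns d Ps, F (patTrans d t M) = F M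
  dF_nonneg : 0 ≤ dF
  rF_nonneg : 0 ≤ rF
  cF_anti : ∀ r s : ℝ, rF ≤ r → r ≤ s → cF s ≤ cF r
  cF_lim : Tendsto cF atTop (nhds 0)
  subadd : ∀ M ∈ BoxPatterns d Ps, ∀ (n : ℕ) (Bj : Fin n → Set (Pt d)),
    (∀ j, IsBox d (Bj j)) →
    (∀ i j, i ≠ j → interior (Bj i) ∩ interior (Bj j) = ∅) →
    (⋃ j, Bj j) = supp d M →
    (∀ j, rF ≤ widthOf d (Bj j)) →
    F M ≤ (∑ j, F (patRestrict d M (Bj j))) +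
      ∑ j, cF (widthOf d (Bj j)) * volOf d (Bj j)
  bound : ∀ M ∈ BoxPatterns d Ps, |F M| ≤ dF * patVol d M

/-- The upper mean `F⁺(r)`. -/
def Fplus (Ps : Set (Set (Set (Pt d)))) (F : Set (Set (Pt d)) → ℝ) (r : ℝ) : ℝ :=
  sSup ((fun P => F P / patVol d P) '' RPatterns d Ps r)

/-- The lower mean `F⁻(r)`. -/
def Fminus (Ps : Set (Set (Set (Pt d)))) (F : Set (Set (Pt d)) → ℝ) (r : ℝ) : ℝ :=
  sInf ((fun P => F P / patVol d P) '' RPatterns d Ps r)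


/-- The tiling space `Ω(𝒫)`: all tilings all of whose finite subpattern classes lie in `Ps`. -/
def TilingsOf (Ps : Set (Set (Set (Pt d)))) : Set (Set (Set (Pt d))) :=
  {T | IsTiling d T ∧ ∀ M : Set (Set (Pt d)), IsPattern d M → M ⊆ T → M ∈ Ps}

/-- The metric `d(T,S)` on the tiling space. -/
def tdist (T S : Set (Set (Pt d))) : ℝ :=
  sInf {ε : ℝ | 0 < ε ∧ ∃ t : Pt d, ‖t‖ ≤ ε ∧
    patRestrict d T (Metric.closedBall (0 : Pt d) (1 / ε)) =
      patRestrict d (patTrans d t S) (Metric.closedBall (0 : Pt d) (1 / ε))}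

namespace OmegaAux

variable {d : ℕ}

lemma patTrans_zero (M : Set (Set (Pt d))) : patTrans d 0 M = M := by
  simp [patTrans]

lemma patTrans_patTrans (s t : Pt d) (M : Set (Set (Pt d))) :
    patTrans d s (patTrans d t M) = patTrans d (t + s) M := by
  unfold patTrans
  rw [Set.image_image]
  apply Set.image_congr'
  intro m
  rw [Set.image_image]
  apply Set.image_congr'
  intro x
  rw [add_assoc]

lemma translate_tile_injective (t : Pt d) :
    Function.Injective (fun m : Set (Pt d) => (fun x => x + t) '' m) := by
  intro a b h
  have h2 := congrArg (Set.image (fun x : Pt d => x + (-t))) h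
  rw [Set.image_image, Set.image_image] at h2
  simpa using h2

lemma patTrans_mono {t : Pt d} {M N : Set (Set (Pt d))} (h : M ⊆ N) :
    patTrans d t M ⊆ patTrans d t N := Set.image_mono h

lemma patTrans_subset_cancel {t : Pt d} {M N : Set (Set (Pt d))}
    (h : patTrans d t M ⊆ patTrans d t N) : M ⊆ N := by
  intro m hm
  obtain ⟨m', hm', he⟩ := h (Set.mem_image_of_mem _ hm)
  rwa [← translate_tile_injective t he]

lemma supp_patTrans (t : Pt d) (M : Set (Set (Pt d))) :
    supp d (patTrans d t M) = (fun x => x + t) '' supp d M := by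
  ext x
  simp only [supp, patTrans, Set.mem_sUnion, Set.mem_image]
  constructor
  · rintro ⟨s, ⟨m, hm, rfl⟩, hx⟩
    obtain ⟨y, hy, rfl⟩ := hx
    exact ⟨y, ⟨m, hm, hy⟩, rfl⟩
  · rintro ⟨y, ⟨m, hm, hy⟩, rfl⟩
    exact ⟨(fun x => x + t) '' m, ⟨m, hm, rfl⟩, ⟨y, hy, rfl⟩⟩

lemma interior_translate (t : Pt d) (s : Set (Pt d)) :
    interior ((fun x => x + t) '' s) = (fun x => x + t) '' interior s := by
  have h := (Homeomorph.addRight t).image_interior s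
  simpa using h.symm

lemma isTile_translate {m : Set (Pt d)} (h : IsTile d m) (t : Pt d) :
    IsTile d ((fun x => x + t) '' m) := by
  obtain ⟨e⟩ := h
  have h1 : m ≃ₜ ((fun x => (x + t : Pt d)) '' m) := by
    have h2 := (Homeomorph.addRight t).image m
    have h3 : (Homeomorph.addRight t) '' m = (fun x => (x + t : Pt d)) '' m := rfl
    rw [h3] at h2
    exact h2
  exact ⟨(h1.symm).trans e⟩

lemma tile_compact {m : Set (Pt d)} (h : IsTile d m) : IsCompact m := by
  obtain ⟨e⟩ := h
  have h1 : CompactSpace (closedBall (0:Pt d) 1) :=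
    isCompact_iff_compactSpace.mp (isCompact_closedBall _ _)
  have h2 : CompactSpace m := e.symm.compactSpace
  exact isCompact_iff_compactSpace.mpr h2

lemma tile_nonempty {m : Set (Pt d)} (h : IsTile d m) : m.Nonempty := by
  obtain ⟨e⟩ := h
  have h1 : Nonempty (closedBall (0:Pt d) 1) := ⟨⟨0, by simp⟩⟩
  have h2 : Nonempty m := ⟨e.symm h1.some⟩
  exact Set.nonempty_coe_sort.mp h2

lemma interior_diff_interior_empty (m : Set (Pt d)) : interior (m \ interior m) = ∅ := by
  apply Set.eq_empty_of_subset_empty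
  intro x hx
  exact (interior_subset hx).2 (interior_mono Set.diff_subset hx)

lemma open_subset_finite_union_closed (G : Finset (Set (Pt d)))
    (hG : ∀ g ∈ G, IsClosed g ∧ interior g = ∅) :
    ∀ U : Set (Pt d), IsOpen U → U ⊆ ⋃ g ∈ G, g → U = ∅ := by
  classical
  induction G using Finset.induction_on with
  | empty =>
    intro U _ h
    simpa using h
  | @insert g₀ G hg₀ ih =>
    intro U hU hsub
    have hg₀c : IsClosed g₀ ∧ interior g₀ = ∅ := hG g₀ (Finset.mem_insert_self _ _)
    have h1 : U ∩ g₀ᶜ = ∅ := by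
      apply ih (fun g hg => hG g (Finset.mem_insert_of_mem hg)) _
        (hU.inter hg₀c.1.isOpen_compl)
      intro x hx
      have := hsub hx.1
      simp only [Finset.mem_insert, Set.mem_iUnion, exists_prop] at this ⊢
      obtain ⟨g, hg | hg, hxg⟩ := this
      · exact absurd (hg ▸ hxg) hx.2
      · exact ⟨g, hg, hxg⟩
    have h2 : U ⊆ g₀ := by
      intro x hx
      by_contra hc
      exact Set.eq_empty_iff_forall_notMem.mp h1 x ⟨hx, hc⟩
    have h3 : U ⊆ interior g₀ := interior_maximal h2 hU
    rw [hg₀c.2] at h3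
    exact Set.subset_empty_iff.mp h3

lemma translate_eq_self {m : Set (Pt d)} (hne : m.Nonempty) (hb : Bornology.IsBounded m)
    {w : Pt d} (h : (fun x => x + w) '' m = m) : w = 0 := by
  by_contra hw
  have hw0 : 0 < ‖w‖ := norm_pos_iff.mpr hw
  obtain ⟨x₀, hx₀⟩ := hne
  have key : ∀ n : ℕ, x₀ + n • w ∈ m := by
    intro n
    induction n with
    | zero => simpa using hx₀
    | succ n ih =>
      have h2 : (x₀ + n • w) + w ∈ m := h ▸ Set.mem_image_of_mem _ ih
      have h3 : x₀ + (n+1) • w = (x₀ + n • w) + w := by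
        rw [succ_nsmul, add_assoc]
      rwa [h3]
  obtain ⟨R, hR⟩ := hb.subset_closedBall 0
  obtain ⟨n, hn⟩ := exists_nat_gt ((R + ‖x₀‖) / ‖w‖)
  have h1 : ‖x₀ + n • w‖ ≤ R := by
    have := hR (key n)
    simpa [mem_closedBall, dist_eq_norm] using this
  have h4 : ‖(n • w : Pt d)‖ = n * ‖w‖ := by
    rw [← Nat.cast_smul_eq_nsmul ℝ, norm_smul]
    simp
  have h5 : (n : ℝ) * ‖w‖ ≤ ‖x₀ + n • w‖ + ‖x₀‖ := by
    calc (n:ℝ) * ‖w‖ = ‖(n • w : Pt d)‖ := h4.symm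
    _ = ‖(x₀ + n • w) - x₀‖ := by congr 1; abel
    _ ≤ ‖x₀ + n • w‖ + ‖x₀‖ := norm_sub_le _ _
  have h6 : (R + ‖x₀‖) < n * ‖w‖ := by
    rwa [div_lt_iff₀ hw0] at hn
  linarith

lemma eventually_eq_of_tendsto_finite {l : Filter ℕ} [l.NeBot] {w : ℕ → Pt d} {V : Set (Pt d)}
    (hV : V.Finite) (hmem : ∀ᶠ n in l, w n ∈ V) {δ : Pt d} (hconv : Tendsto w l (nhds δ)) :
    ∀ᶠ n in l, w n = δ := by
  have hV' : IsClosed (V \ {δ} : Set (Pt d)) := (hV.subset Set.diff_subset).isClosed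
  have hδ : δ ∈ (V \ {δ} : Set (Pt d))ᶜ := by simp
  have h2 : ∀ᶠ n in l, w n ∈ (V \ {δ} : Set (Pt d))ᶜ :=
    hconv (hV'.isOpen_compl.mem_nhds hδ)
  filter_upwards [hmem, h2] with n h1 h3
  by_contra hne
  exact h3 ⟨h1, hne⟩

lemma finite_of_packing {X : Set (Set (Pt d))}
    (hpair : X.Pairwise fun m m' => interior m ∩ interior m' = ∅)
    {r0 R : ℝ} (hr0 : 0 < r0)
    {M : Set (Set (Pt d))} (hM : M ⊆ X)
    (z : Set (Pt d) → Pt d)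
    (hz : ∀ m ∈ M, closedBall (z m) r0 ⊆ interior m)
    (hloc : ∀ m ∈ M, z m ∈ closedBall (0 : Pt d) R) : M.Finite := by
  classical
  obtain ⟨t, htfin, htcov⟩ := (totallyBounded_iff.mp
    (isCompact_closedBall (0:Pt d) R).totallyBounded) (r0/2) (by positivity)
  have hzmem : ∀ m ∈ M, ∃ y ∈ t, z m ∈ ball y (r0/2) := by
    intro m hm
    have := htcov (hloc m hm)
    simpa using this
  choose F hF1 hF2 using hzmem
  -- F is defined on membership proofs; package as a function on M
  have hinj : Set.InjOn (fun m => if hm : m ∈ M then F m hm else 0) M := by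
    intro a ha b hb hab
    simp only [dif_pos ha, dif_pos hb] at hab
    by_contra hne
    have hd : dist (z a) (z b) < r0 := by
      have h1 := hF2 a ha
      have h2 := hF2 b hb
      rw [mem_ball] at h1 h2
      calc dist (z a) (z b) ≤ dist (z a) (F a ha) + dist (z b) (F b hb) := by
            rw [hab]; exact dist_triangle_right _ _ _
      _ < r0/2 + r0/2 := by linarith
      _ = r0 := by ring
    have hzb : z b ∈ interior a := hz a ha (by rw [mem_closedBall, dist_comm]; exact hd.le)
    have hzb' : z b ∈ interior b := hz b hb (mem_closedBall_self hr0.le)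
    have := hpair (hM ha) (hM hb) hne
    exact Set.eq_empty_iff_forall_notMem.mp this (z b) ⟨hzb, hzb'⟩
  have himg : (fun m => if hm : m ∈ M then F m hm else 0) '' M ⊆ t := by
    rintro y ⟨m, hm, rfl⟩
    simp only [dif_pos hm]
    exact hF1 m hm
  exact Set.Finite.of_finite_image (htfin.subset himg) hinj

lemma pairwise_patTrans (t : Pt d) {M : Set (Set (Pt d))}
    (h : M.Pairwise fun m m' => interior m ∩ interior m' = ∅) :
    (patTrans d t M).Pairwise fun m m' => interior m ∩ interior m' = ∅ := by
  rintro a ⟨ma, hma, rfl⟩ b ⟨mb, hmb, rfl⟩ hab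
  have hne : ma ≠ mb := fun he => hab (by rw [he])
  have h2 := h hma hmb hne
  have hinj : Function.Injective (fun x : Pt d => x + t) := fun x y hxy => by
    simpa using congrArg (fun z => z + (-t)) hxy
  rw [interior_translate, interior_translate, ← Set.image_inter hinj, h2]
  simp

lemma isPattern_patTrans {M : Set (Set (Pt d))} (h : IsPattern d M) (t : Pt d) :
    IsPattern d (patTrans d t M) :=
  ⟨h.1.image _, h.2.1.image _,
    by rintro m ⟨m', hm', rfl⟩; exact isTile_translate (h.2.2.1 m' hm') t,
    pairwise_patTrans t h.2.2.2⟩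

lemma isTiling_patTrans {T : Set (Set (Pt d))} (h : IsTiling d T) (t : Pt d) :
    IsTiling d (patTrans d t T) := by
  refine ⟨?_, pairwise_patTrans t h.2.1, ?_⟩
  · rintro m ⟨m', hm', rfl⟩; exact isTile_translate (h.1 m' hm') t
  · rw [show (⋃₀ (patTrans d t T)) = supp d (patTrans d t T) from rfl, supp_patTrans,
      show (supp d T) = ⋃₀ T from rfl, h.2.2]
    apply Set.image_univ_of_surjective
    intro y; exact ⟨y - t, by simp⟩

lemma restrict_eq {X Y : Set (Set (Pt d))}
    (hX : IsTiling d X) (hY : IsTiling d Y)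
    {r0 D ρ k : ℝ} (hr0 : 0 < r0) (hD : 0 < D) (hρ : 0 < ρ) (hk : ρ + 2*D ≤ k)
    (hYin : ∀ s ∈ Y, ∃ z, closedBall z r0 ⊆ interior s)
    (hYout : ∀ s ∈ Y, ∃ y, s ⊆ closedBall y D)
    (hMY : {m | m ∈ X ∧ (m ∩ closedBall (0:Pt d) k).Nonempty} ⊆ Y)
    (hMfin : {m | m ∈ X ∧ (m ∩ closedBall (0:Pt d) k).Nonempty}.Finite) :
    patRestrict d X (closedBall (0:Pt d) ρ) = patRestrict d Y (closedBall (0:Pt d) ρ) := by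
  classical
  set B := closedBall (0:Pt d) ρ with hB
  set M := {m | m ∈ X ∧ (m ∩ closedBall (0:Pt d) k).Nonempty} with hM
  have hMX : M ⊆ X := fun m hm => hm.1
  have hsupp : closedBall (0:Pt d) k ⊆ supp d M := by
    intro x hx
    have hx2 : x ∈ ⋃₀ X := by rw [hX.2.2]; trivial
    obtain ⟨m, hmX, hxm⟩ := hx2
    exact ⟨m, ⟨hmX, ⟨x, hxm, hx⟩⟩, hxm⟩
  have hρk : ρ ≤ k := by linarith
  have keyX : ∀ m ∈ X, (m ∩ interior B).Nonempty → m ∈ M := by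
    rintro m hm ⟨p, hpm, hpB⟩
    exact ⟨hm, ⟨p, hpm, closedBall_subset_closedBall hρk (interior_subset hpB)⟩⟩
  have key : ∀ s ∈ Y, (s ∩ interior B).Nonempty → s ∈ M := by
    rintro s hs ⟨p, hps, hpB⟩
    by_contra hsM
    obtain ⟨y, hy⟩ := hYout s hs
    have hpB' : p ∈ B := interior_subset hpB
    have hsub : s ⊆ closedBall (0:Pt d) k := by
      intro q hq
      have h1 : dist q p ≤ 2*D := by
        calc dist q p ≤ dist q y + dist p y := dist_triangle_right _ _ _
        _ ≤ D + D := add_le_add (hy hq) (hy hps)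
        _ = 2*D := by ring
      have h2 : dist p 0 ≤ ρ := mem_closedBall.mp hpB'
      rw [mem_closedBall]
      calc dist q 0 ≤ dist q p + dist p 0 := dist_triangle _ _ _
      _ ≤ 2*D + ρ := add_le_add h1 h2
      _ ≤ k := by linarith
    obtain ⟨z, hz⟩ := hYin s hs
    set G : Finset (Set (Pt d)) := hMfin.toFinset.image (fun m => m \ interior m) with hG
    have hcover : ball z r0 ⊆ ⋃ g ∈ G, g := by
      intro x hx
      have hxint : x ∈ interior s := ball_subset_closedBall.trans hz hx
      have hxs : x ∈ s := interior_subset hxint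
      obtain ⟨m, hmM, hxm⟩ := hsupp (hsub hxs)
      have hmem : x ∉ interior m := by
        intro hxi
        have hne : s ≠ m := fun he => hsM (he ▸ hmM)
        have h3 := hY.2.1 hs (hMY hmM) hne
        exact Set.eq_empty_iff_forall_notMem.mp h3 x ⟨hxint, hxi⟩
      simp only [Set.mem_iUnion, exists_prop]
      exact ⟨m \ interior m, Finset.mem_image.mpr ⟨m, hMfin.mem_toFinset.mpr hmM, rfl⟩,
        ⟨hxm, hmem⟩⟩
    have hcl : ∀ g ∈ G, IsClosed g ∧ interior g = ∅ := by
      intro g hg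
      obtain ⟨m, hm, rfl⟩ := Finset.mem_image.mp hg
      have hmX : m ∈ X := (hMfin.mem_toFinset.mp hm).1
      have hclm : IsClosed m := (tile_compact (hX.1 m hmX)).isClosed
      exact ⟨hclm.inter isOpen_interior.isClosed_compl, interior_diff_interior_empty m⟩
    have hempty := open_subset_finite_union_closed G hcl (ball z r0) isOpen_ball hcover
    exact absurd hempty (Set.nonempty_iff_ne_empty.mp ⟨z, mem_ball_self hr0⟩)
  ext s'
  simp only [patRestrict, Set.mem_setOf_eq]
  constructor
  · rintro ⟨m, hm, hne, rfl⟩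
    exact ⟨m, hMY (keyX m hm hne), hne, rfl⟩
  · rintro ⟨m, hm, hne, rfl⟩
    exact ⟨m, hMX (key m hm hne), hne, rfl⟩

lemma supp_mono {M N : Set (Set (Pt d))} (h : M ⊆ N) : supp d M ⊆ supp d N := by
  rintro x ⟨m, hm, hx⟩; exact ⟨m, h hm, hx⟩

lemma isPattern_singleton {m : Set (Pt d)} (ht : IsTile d m) : IsPattern d {m} :=
  ⟨Set.finite_singleton m, ⟨m, rfl⟩,
    fun m' hm' => by rwa [Set.mem_singleton_iff.mp hm'], Set.pairwise_singleton _ _⟩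

lemma singleton_tile_facts {m : Set (Pt d)} (ht : IsTile d m)
    {rmin rmax : ℝ} (h0 : 0 < rmin)
    (hin : rmin ≤ rIn d {m}) (hout : rOut d {m} ≤ rmax) :
    (∃ z, closedBall z (rmin/2) ⊆ interior m) ∧ (∃ y, m ⊆ closedBall y (rmax+1)) := by
  have hsupp : supp d {m} = m := Set.sUnion_singleton m
  constructor
  · have h1 : rmin/2 < sSup {r : ℝ | ∃ x : Pt d, closedBall x r ⊆ supp d {m}} :=
      lt_of_lt_of_le (by linarith) hin
    have hne : {r : ℝ | ∃ x : Pt d, closedBall x r ⊆ supp d {m}}.Nonempty :=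
      ⟨-1, ⟨0, by rw [Metric.closedBall_eq_empty.mpr (by norm_num)]; exact Set.empty_subset _⟩⟩
    obtain ⟨r, ⟨x, hx⟩, hr⟩ := exists_lt_of_lt_csSup hne h1
    rw [hsupp] at hx
    exact ⟨x, (closedBall_subset_ball hr).trans
      (interior_maximal (ball_subset_closedBall.trans hx) isOpen_ball)⟩
  · have hne : {r : ℝ | ∃ x : Pt d, supp d {m} ⊆ closedBall x r}.Nonempty := by
      obtain ⟨R, hR⟩ := (tile_compact ht).isBounded.subset_closedBall 0
      exact ⟨R, 0, by rw [hsupp]; exact hR⟩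
    have h2 : sInf {r : ℝ | ∃ x : Pt d, supp d {m} ⊆ closedBall x r} < rmax + 1 :=
      lt_of_le_of_lt hout (by linarith)
    obtain ⟨r, ⟨y, hy⟩, hr⟩ := exists_lt_of_csInf_lt hne h2
    rw [hsupp] at hy
    exact ⟨y, hy.trans (closedBall_subset_closedBall hr.le)⟩

lemma rOut_le {M : Set (Set (Pt d))} {R : ℝ} (hne : (supp d M).Nonempty)
    (h : supp d M ⊆ closedBall (0:Pt d) R) : rOut d M ≤ R := by
  have hmem : R ∈ {r : ℝ | ∃ x : Pt d, supp d M ⊆ closedBall x r} := ⟨0, h⟩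
  apply csInf_le _ hmem
  refine ⟨0, ?_⟩
  rintro r ⟨x, hx⟩
  obtain ⟨p, hp⟩ := hne
  exact dist_nonneg.trans (mem_closedBall.mp (hx hp))

lemma le_rOut {M : Set (Set (Pt d))} {a b : Pt d} (ha : a ∈ supp d M) (hb : b ∈ supp d M)
    (hbound : {r : ℝ | ∃ x : Pt d, supp d M ⊆ closedBall x r}.Nonempty) :
    dist a b / 2 ≤ rOut d M := by
  apply le_csInf hbound
  rintro r ⟨x, hx⟩
  have h1 : dist a x ≤ r := mem_closedBall.mp (hx ha)
  have h2 : dist b x ≤ r := mem_closedBall.mp (hx hb)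
  have h3 : dist a b ≤ dist a x + dist b x := dist_triangle_right _ _ _
  linarith

lemma rIn_bddAbove {M : Set (Set (Pt d))} {R : ℝ} (hR : 0 ≤ R)
    (h : supp d M ⊆ closedBall (0:Pt d) R)
    (e : Pt d) (he : ‖e‖ = 1) :
    BddAbove {r : ℝ | ∃ x : Pt d, closedBall x r ⊆ supp d M} := by
  refine ⟨2*R, ?_⟩
  rintro r ⟨x, hx⟩
  by_contra hlt
  push_neg at hlt
  have hr0 : 0 ≤ r := by linarith
  have h1 : x ∈ closedBall (0:Pt d) R := h (hx (mem_closedBall_self hr0))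
  have h2 : x + r • e ∈ closedBall (0:Pt d) R := by
    apply h; apply hx
    rw [mem_closedBall, dist_eq_norm, add_sub_cancel_left, norm_smul, he]
    simp [abs_of_nonneg hr0]
  have h3 : r ≤ 2*R := by
    calc r = ‖r • e‖ := by rw [norm_smul, he]; simp [abs_of_nonneg hr0]
    _ = ‖(x + r • e) - x‖ := by congr 1; abel
    _ ≤ ‖x + r • e‖ + ‖x‖ := norm_sub_le _ _
    _ ≤ R + R := add_le_add (by simpa [mem_closedBall, dist_eq_norm] using h2)
        (by simpa [mem_closedBall, dist_eq_norm] using h1)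
    _ = 2*R := by ring
  linarith

lemma exists_unit_vector (hd : 0 < d) : ∃ e : Pt d, ‖e‖ = 1 := by
  refine ⟨EuclideanSpace.single ⟨0, hd⟩ (1:ℝ), ?_⟩
  rw [EuclideanSpace.norm_single]
  norm_num

lemma finite_translates {m₀ : Set (Pt d)} (hne : m₀.Nonempty) (hb : Bornology.IsBounded m₀)
    {Y : Set (Set (Pt d))} (hfin : Y.Finite) :
    {p : Pt d | (fun x => x + p) '' m₀ ∈ Y}.Finite := by
  have hinj : Set.InjOn (fun p => (fun x : Pt d => x + p) '' m₀)
      {p : Pt d | (fun x => x + p) '' m₀ ∈ Y} := by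
    intro p hp q hq hpq
    have h2 : (fun x : Pt d => x + (p - q)) '' m₀ = m₀ := by
      have h3 := congrArg (Set.image (fun x : Pt d => x + (-q))) hpq
      rw [Set.image_image, Set.image_image] at h3
      have h4 : (fun x : Pt d => x + q + -q) = fun x : Pt d => x := by
        funext x; abel
      rw [h4, Set.image_id'] at h3
      have h5 : (fun x : Pt d => x + (p - q)) = fun x : Pt d => x + p + -q := by
        funext x; abel
      rw [h5]; exact h3
    have := translate_eq_self hne hb h2
    exact sub_eq_zero.mp this
  have himg : (fun p => (fun x : Pt d => x + p) '' m₀) ''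
      {p : Pt d | (fun x => x + p) '' m₀ ∈ Y} ⊆ Y := by
    rintro y ⟨p, hp, rfl⟩; exact hp
  exact Set.Finite.of_finite_image (hfin.subset himg) hinj

lemma patch_props {Tn : Set (Set (Pt d))} (hTn : IsTiling d Tn)
    {rmin rmax : ℝ} (h0 : 0 < rmin)
    (hfacts : ∀ m ∈ Tn, (∃ z, closedBall z (rmin/2) ⊆ interior m) ∧
      (∃ y, m ⊆ closedBall y (rmax+1)))
    {R : ℝ} (hR : 0 ≤ R) :
    IsPattern d {m | m ∈ Tn ∧ (m ∩ closedBall (0:Pt d) R).Nonempty} ∧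
    closedBall (0:Pt d) R ⊆ supp d {m | m ∈ Tn ∧ (m ∩ closedBall (0:Pt d) R).Nonempty} ∧
    supp d {m | m ∈ Tn ∧ (m ∩ closedBall (0:Pt d) R).Nonempty} ⊆
      closedBall (0:Pt d) (R + 2*(rmax+1)) := by
  classical
  set M := {m | m ∈ Tn ∧ (m ∩ closedBall (0:Pt d) R).Nonempty} with hM
  have hsub : M ⊆ Tn := fun m hm => hm.1
  have hsupp1 : closedBall (0:Pt d) R ⊆ supp d M := by
    intro x hx
    have hx2 : x ∈ ⋃₀ Tn := by rw [hTn.2.2]; trivial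
    obtain ⟨m, hmX, hxm⟩ := hx2
    exact ⟨m, ⟨hmX, ⟨x, hxm, hx⟩⟩, hxm⟩
  have hsupp2 : supp d M ⊆ closedBall (0:Pt d) (R + 2*(rmax+1)) := by
    rintro q ⟨m, hm, hq⟩
    obtain ⟨p, hpm, hpB⟩ := hm.2
    obtain ⟨y, hy⟩ := (hfacts m hm.1).2
    rw [mem_closedBall]
    have h1 : dist q p ≤ 2*(rmax+1) := by
      calc dist q p ≤ dist q y + dist p y := dist_triangle_right _ _ _
      _ ≤ (rmax+1) + (rmax+1) := add_le_add (hy hq) (hy hpm)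
      _ = 2*(rmax+1) := by ring
    calc dist q 0 ≤ dist q p + dist p 0 := dist_triangle _ _ _
    _ ≤ 2*(rmax+1) + R := add_le_add h1 (mem_closedBall.mp hpB)
    _ = R + 2*(rmax+1) := by ring
  have h1 : ∀ m, m ∈ M → ∃ z, closedBall z (rmin/2) ⊆ interior m :=
    fun m hm => (hfacts m hm.1).1
  choose zf hzf using h1
  have hfin : M.Finite := by
    apply finite_of_packing hTn.2.1 (by positivity : (0:ℝ) < rmin/2) hsub
      (fun m => if hm : m ∈ M then zf m hm else 0)
    · intro m hm; rw [dif_pos hm]; exact hzf m hm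
    · intro m hm; rw [dif_pos hm]
      apply hsupp2
      exact ⟨m, hm, interior_subset (hzf m hm (mem_closedBall_self (by positivity)))⟩
  have hne : M.Nonempty := by
    obtain ⟨m, hm, -⟩ := hsupp1 (mem_closedBall_self hR)
    exact ⟨m, hm⟩
  exact ⟨⟨hfin, hne, fun m hm => hTn.1 m hm.1, hTn.2.1.mono hsub⟩, hsupp1, hsupp2⟩

end OmegaAux

/-- Proposition 2.4. If `Ps` is admissible and linearly repetitive, then
`Ω(Ps)` is compact with respect to the metric `d`; for a metric space this is equivalent to
sequential compactness: every sequence of tilings in `Ω(Ps)` has a subsequence converging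
(in the metric `d`) to a tiling in `Ω(Ps)`. -/
theorem omega_compact (d : ℕ) (Ps : Set (Set (Set (Pt d))))
    (hadm : Admissible d Ps) (hlr : LinearlyRepetitive d Ps) :
    ∀ T : ℕ → Set (Set (Pt d)), (∀ n, T n ∈ TilingsOf d Ps) →
      ∃ S ∈ TilingsOf d Ps, ∃ φ : ℕ → ℕ, StrictMono φ ∧
        Tendsto (fun n => tdist d (T (φ n)) S) atTop (nhds 0) := by
  classical
  intro T hT
  obtain ⟨rmin, rmax, hrmin, hminmax, htb⟩ := hadm.tileBounds
  obtain ⟨c, hc, hlrp⟩ := hlr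
  have hTiling : ∀ n, IsTiling d (T n) := fun n => (hT n).1
  have hPat : ∀ n, ∀ M : Set (Set (Pt d)), IsPattern d M → M ⊆ T n → M ∈ Ps :=
    fun n => (hT n).2
  have tile_Ps : ∀ n, ∀ m ∈ T n, ({m} : Set (Set (Pt d))) ∈ Ps := fun n m hm =>
    hPat n {m} (OmegaAux.isPattern_singleton ((hTiling n).1 m hm))
      (Set.singleton_subset_iff.mpr hm)
  rcases Nat.eq_zero_or_pos d with hd0 | hdpos
  · exfalso
    subst hd0
    have h1 : (0 : Pt 0) ∈ ⋃₀ T 0 := by rw [(hTiling 0).2.2]; trivial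
    obtain ⟨m, hm, h0m⟩ := h1
    have h2 := (htb m (tile_Ps 0 m hm)).1
    have hmuniv : supp 0 {m} = Set.univ := by
      apply Set.eq_univ_of_forall
      intro x
      have hx : x = (0 : Pt 0) := Subsingleton.elim x 0
      rw [hx]; exact ⟨m, rfl, h0m⟩
    have h3 : {r : ℝ | ∃ x : Pt 0, closedBall x r ⊆ supp 0 {m}} = Set.univ := by
      apply Set.eq_univ_of_forall
      intro r
      exact ⟨0, by rw [hmuniv]; exact Set.subset_univ _⟩
    rw [rIn, h3, Real.sSup_univ] at h2
    linarith
  obtain ⟨e, he⟩ := OmegaAux.exists_unit_vector hdpos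
  have hrmax : 0 < rmax := lt_of_lt_of_le hrmin hminmax
  have tfacts : ∀ n, ∀ m ∈ T n, (∃ z, closedBall z (rmin/2) ⊆ interior m) ∧
      (∃ y, m ⊆ closedBall y (rmax+1)) := by
    intro n m hm
    have hb := htb m (tile_Ps n m hm)
    exact OmegaAux.singleton_tile_facts ((hTiling n).1 m hm) hrmin hb.1 hb.2.2
  -- patches
  set patch : ℕ → ℕ → Set (Set (Pt d)) :=
    fun k n => {m | m ∈ T n ∧ (m ∩ closedBall (0:Pt d) ((k:ℝ)+1)).Nonempty} with hpatchdef
  have hk1 : ∀ k : ℕ, (0:ℝ) ≤ (k:ℝ)+1 := fun k => by positivity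
  have hpp : ∀ k n, IsPattern d (patch k n) ∧
      closedBall (0:Pt d) ((k:ℝ)+1) ⊆ supp d (patch k n) ∧
      supp d (patch k n) ⊆ closedBall (0:Pt d) (((k:ℝ)+1) + 2*(rmax+1)) :=
    fun k n => OmegaAux.patch_props (hTiling n) hrmin (tfacts n) (hk1 k)
  have hpatchTn : ∀ k n, patch k n ⊆ T n := fun k n m hm => hm.1
  have hpatchPs : ∀ k n, patch k n ∈ Ps := fun k n => hPat n _ (hpp k n).1 (hpatchTn k n)
  have hsuppne : ∀ k n, (supp d (patch k n)).Nonempty :=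
    fun k n => ⟨0, (hpp k n).2.1 (mem_closedBall_self (hk1 k))⟩
  have hrOut_le : ∀ k n, rOut d (patch k n) ≤ ((k:ℝ)+1) + 2*(rmax+1) :=
    fun k n => OmegaAux.rOut_le (hsuppne k n) (hpp k n).2.2
  have hmem_smul : ∀ (k : ℕ) (r : ℝ), |r| ≤ (k:ℝ)+1 → r • e ∈ closedBall (0:Pt d) ((k:ℝ)+1) := by
    intro k r hr
    rw [mem_closedBall, dist_eq_norm, sub_zero, norm_smul, he, mul_one]
    exact hr
  have hrOut_ge : ∀ k n, 1 ≤ rOut d (patch k n) := by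
    intro k n
    have ha : (((k:ℝ)+1)) • e ∈ supp d (patch k n) :=
      (hpp k n).2.1 (hmem_smul k _ (by rw [abs_of_nonneg (hk1 k)]))
    have hb2 : ((-((k:ℝ)+1))) • e ∈ supp d (patch k n) :=
      (hpp k n).2.1 (hmem_smul k _ (by rw [abs_neg, abs_of_nonneg (hk1 k)]))
    have hbound : {r : ℝ | ∃ x : Pt d, supp d (patch k n) ⊆ closedBall x r}.Nonempty :=
      ⟨((k:ℝ)+1) + 2*(rmax+1), 0, (hpp k n).2.2⟩
    have hdist : dist ((((k:ℝ)+1)) • e) (((-((k:ℝ)+1))) • e) = 2*((k:ℝ)+1) := by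
      rw [dist_eq_norm, ← sub_smul, norm_smul, he, mul_one]
      have : ((k:ℝ)+1) - (-((k:ℝ)+1)) = 2*((k:ℝ)+1) := by ring
      rw [this, Real.norm_eq_abs, abs_of_nonneg (by positivity)]
    have := OmegaAux.le_rOut ha hb2 hbound
    rw [hdist] at this
    have hk0 : (0:ℝ) ≤ (k:ℝ) := Nat.cast_nonneg k
    linarith
  -- big patches
  have hKex : ∀ k : ℕ, ∃ K : ℕ, c * (((k:ℝ)+1) + 2*(rmax+1)) ≤ K := fun k => exists_nat_ge _
  choose K hK using hKex
  have hrInQ : ∀ k, ((K k : ℝ)+1) ≤ rIn d (patch (K k) 0) := by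
    intro k
    have hmem : ((K k : ℝ)+1) ∈ {r : ℝ | ∃ x : Pt d, closedBall x r ⊆ supp d (patch (K k) 0)} :=
      ⟨0, (hpp (K k) 0).2.1⟩
    exact le_csSup (OmegaAux.rIn_bddAbove (by positivity) (hpp (K k) 0).2.2 e he) hmem
  -- LR occurrences
  have hsub : ∀ k n, ∃ uu : Pt d, patTrans d uu (patch k n) ⊆ patch (K k) 0 := by
    intro k n
    apply hlrp (patch k n) (hpatchPs k n) (hrOut_ge k n) (patch (K k) 0) (hpatchPs (K k) 0)
    calc c * rOut d (patch k n) ≤ c * (((k:ℝ)+1) + 2*(rmax+1)) :=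
        mul_le_mul_of_nonneg_left (hrOut_le k n) hc.le
    _ ≤ (K k : ℝ) := hK k
    _ ≤ (K k : ℝ) + 1 := by linarith
    _ ≤ rIn d (patch (K k) 0) := hrInQ k
  choose u hu using hsub
  set v : ℕ → ℕ → Pt d := fun k n => -(u k n) with hv
  have hubound : ∀ k n, u k n ∈ closedBall (0:Pt d) (((K k : ℝ)+1) + 2*(rmax+1)) := by
    intro k n
    have h0supp : (0:Pt d) ∈ supp d (patch k n) := (hpp k n).2.1 (mem_closedBall_self (hk1 k))
    have h1 : u k n ∈ supp d (patTrans d (u k n) (patch k n)) := by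
      rw [OmegaAux.supp_patTrans]
      exact ⟨0, h0supp, by simp⟩
    exact (hpp (K k) 0).2.2 (OmegaAux.supp_mono (hu k n) h1)
  -- ultrafilter
  set U : Ultrafilter ℕ := Filter.hyperfilter ℕ with hUdef
  have hinf : ∀ s : Set ℕ, s ∈ U → s.Infinite := by
    intro s hs
    by_contra hfin
    rw [Set.not_infinite] at hfin
    exact Set.Finite.notMem_hyperfilter hfin hs
  set cls : ℕ → ℕ → Set (Set (Pt d)) := fun k n => patTrans d (u k n) (patch k n) with hcls
  have hCex : ∀ k, ∃ C, {n | cls k n = C} ∈ U := by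
    intro k
    have hclsfin : {P : Set (Set (Pt d)) | P ⊆ patch (K k) 0}.Finite :=
      Set.Finite.finite_subsets (hpp (K k) 0).1.1
    have hmemmap : {P : Set (Set (Pt d)) | P ⊆ patch (K k) 0} ∈
        Ultrafilter.map (fun n => cls k n) U := by
      rw [Ultrafilter.mem_map]
      have : (fun n => cls k n) ⁻¹' {P : Set (Set (Pt d)) | P ⊆ patch (K k) 0} = Set.univ := by
        apply Set.eq_univ_of_forall
        intro n
        exact hu k n
      rw [this]
      exact Filter.univ_mem
    obtain ⟨C, hC1, hC2⟩ := Ultrafilter.eq_pure_of_finite_mem hclsfin hmemmap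
    refine ⟨C, ?_⟩
    have h1 : {C} ∈ Ultrafilter.map (fun n => cls k n) U := by
      rw [hC2]; exact Filter.mem_pure.mpr rfl
    rw [Ultrafilter.mem_map] at h1
    have h2 : (fun n => cls k n) ⁻¹' {C} = {n | cls k n = C} := rfl
    rwa [h2] at h1
  choose Cc hCc using hCex
  have hvbound : ∀ k n, v k n ∈ closedBall (0:Pt d) (((K k : ℝ)+1) + 2*(rmax+1)) := by
    intro k n
    have := hubound k n
    rw [mem_closedBall, dist_eq_norm, sub_zero] at this ⊢
    rw [hv]; simpa using this
  have hτex : ∀ k, ∃ τ0 : Pt d, Tendsto (fun n => v k n) (U : Filter ℕ) (nhds τ0) := by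
    intro k
    have hle : (Ultrafilter.map (fun n => v k n) U : Filter (Pt d)) ≤
        Filter.principal (closedBall (0:Pt d) (((K k : ℝ)+1) + 2*(rmax+1))) := by
      rw [Filter.le_principal_iff, Ultrafilter.mem_coe, Ultrafilter.mem_map]
      have : (fun n => v k n) ⁻¹' closedBall (0:Pt d) (((K k : ℝ)+1) + 2*(rmax+1)) =
          Set.univ := Set.eq_univ_of_forall (fun n => hvbound k n)
      rw [this]; exact Filter.univ_mem
    obtain ⟨τ0, _, hτ2⟩ := (isCompact_closedBall (0:Pt d)
      (((K k : ℝ)+1) + 2*(rmax+1))).ultrafilter_le_nhds _ hle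
    refine ⟨τ0, ?_⟩
    rwa [Ultrafilter.coe_map] at hτ2
  choose τ hτ using hτex
  set level : ℕ → Set (Set (Pt d)) := fun k => patTrans d (τ k) (Cc k) with hleveldef
  have hrec : ∀ k n, cls k n = Cc k → patch k n = patTrans d (-(u k n)) (Cc k) := by
    intro k n h
    rw [← h, hcls]
    rw [OmegaAux.patTrans_patTrans, add_neg_cancel, OmegaAux.patTrans_zero]
  have hlevel_eq : ∀ k n, cls k n = Cc k →
      level k = patTrans d (u k n + τ k) (patch k n) := by
    intro k n h
    rw [hleveldef]
    show patTrans d (τ k) (Cc k) = _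
    rw [← h, hcls, OmegaAux.patTrans_patTrans]
  have hev1 : ∀ k, ∀ᶠ n in (U : Filter ℕ), cls k n = Cc k :=
    fun k => Filter.eventually_iff.mpr (Ultrafilter.mem_coe.mpr (hCc k))
  -- chain
  have hchain : ∀ k, level k ⊆ level (k+1) := by
    intro k
    have hmono : ∀ n, patch k n ⊆ patch (k+1) n := by
      intro n m hm
      obtain ⟨p, hp1, hp2⟩ := hm.2
      exact ⟨hm.1, p, hp1, closedBall_subset_closedBall (by push_cast; linarith) hp2⟩
    have hsubc : ∀ n, cls k n = Cc k → cls (k+1) n = Cc (k+1) →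
        patTrans d (v k n - v (k+1) n) (Cc k) ⊆ Cc (k+1) := by
      intro n h1 h2
      have e1 : patTrans d (u (k+1) n) (patch k n) ⊆ Cc (k+1) := by
        rw [← h2, hcls]
        exact OmegaAux.patTrans_mono (hmono n)
      have e2 : patTrans d (u (k+1) n) (patch k n)
          = patTrans d (v k n - v (k+1) n) (Cc k) := by
        have hveq : -(u k n) + u (k+1) n = v k n - v (k+1) n := by
          simp only [hv]
          module
        rw [hrec k n h1, OmegaAux.patTrans_patTrans, hveq]
      rw [← e2]; exact e1
    obtain ⟨n₀, hn₀⟩ := Filter.nonempty_of_mem (Filter.eventually_iff.mp (hev1 k))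
    have hCkne : (Cc k).Nonempty := by
      rw [← hn₀]
      exact ((hpp k n₀).1.2.1).image _
    obtain ⟨m₀, hm₀⟩ := hCkne
    have hm₀c : IsCompact m₀ ∧ m₀.Nonempty := by
      have hm₀' : m₀ ∈ cls k n₀ := by rw [hn₀]; exact hm₀
      obtain ⟨m₁, hm₁, rfl⟩ := hm₀'
      have ht1 : IsTile d m₁ := (hpp k n₀).1.2.2.1 m₁ hm₁
      have ht2 := OmegaAux.isTile_translate ht1 (u k n₀)
      exact ⟨OmegaAux.tile_compact ht2, OmegaAux.tile_nonempty ht2⟩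
    have hVfin : {p : Pt d | (fun x => x + p) '' m₀ ∈ Cc (k+1)}.Finite := by
      apply OmegaAux.finite_translates hm₀c.2 hm₀c.1.isBounded
      obtain ⟨n₁, hn₁⟩ := Filter.nonempty_of_mem (Filter.eventually_iff.mp (hev1 (k+1)))
      rw [← hn₁]
      exact ((hpp (k+1) n₁).1.1).image _
    have hwmem : ∀ᶠ n in (U : Filter ℕ),
        v k n - v (k+1) n ∈ {p : Pt d | (fun x => x + p) '' m₀ ∈ Cc (k+1)} := by
      filter_upwards [hev1 k, hev1 (k+1)] with n h1 h2
      exact hsubc n h1 h2 (Set.mem_image_of_mem _ hm₀)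
    have hwt : Tendsto (fun n => v k n - v (k+1) n) (U : Filter ℕ)
        (nhds (τ k - τ (k+1))) := (hτ k).sub (hτ (k+1))
    have hev := OmegaAux.eventually_eq_of_tendsto_finite hVfin hwmem hwt
    obtain ⟨n, hwn, h1n, h2n⟩ := (hev.and ((hev1 k).and (hev1 (k+1)))).exists
    have hδ : patTrans d (τ k - τ (k+1)) (Cc k) ⊆ Cc (k+1) := by
      rw [← hwn]; exact hsubc n h1n h2n
    have heq : patTrans d (τ (k+1)) (patTrans d (τ k - τ (k+1)) (Cc k))
        = patTrans d (τ k) (Cc k) := by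
      have hveq : τ k - τ (k+1) + τ (k+1) = τ k := by module
      rw [OmegaAux.patTrans_patTrans, hveq]
    show patTrans d (τ k) (Cc k) ⊆ patTrans d (τ (k+1)) (Cc (k+1))
    rw [← heq]
    exact OmegaAux.patTrans_mono hδ
  have hchain' : ∀ k l, k ≤ l → level k ⊆ level l := by
    intro k l hkl
    induction l, hkl using Nat.le_induction with
    | base => exact subset_rfl
    | succ l hkl ih => exact ih.trans (hchain l)
  set S : Set (Set (Pt d)) := ⋃ k, level k with hSdef
  have hlevel_sub_S : ∀ k, level k ⊆ S := fun k => Set.subset_iUnion (fun k => level k) k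
  have hgoodn : ∀ k, ∃ n, cls k n = Cc k ∧ dist (v k n) (τ k) < 1 := by
    intro k
    have ev2 : ∀ᶠ n in (U : Filter ℕ), dist (v k n) (τ k) < 1 := by
      have := (hτ k) (Metric.ball_mem_nhds (τ k) one_pos)
      filter_upwards [this] with n hn using mem_ball.mp hn
    exact ((hev1 k).and ev2).exists
  have hStiling : IsTiling d S := by
    refine ⟨?_, ?_, ?_⟩
    · rintro m hm
      obtain ⟨k, hk⟩ := Set.mem_iUnion.mp hm
      obtain ⟨n, hn, -⟩ := hgoodn k
      rw [hlevel_eq k n hn] at hk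
      obtain ⟨m₁, hm₁, rfl⟩ := hk
      exact OmegaAux.isTile_translate ((hpp k n).1.2.2.1 m₁ hm₁) _
    · intro a ha b hb hab
      obtain ⟨k₁, hk₁⟩ := Set.mem_iUnion.mp ha
      obtain ⟨k₂, hk₂⟩ := Set.mem_iUnion.mp hb
      have hka : a ∈ level (max k₁ k₂) := hchain' _ _ (le_max_left _ _) hk₁
      have hkb : b ∈ level (max k₁ k₂) := hchain' _ _ (le_max_right _ _) hk₂
      obtain ⟨n, hn, -⟩ := hgoodn (max k₁ k₂)
      rw [hlevel_eq _ n hn] at hka hkb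
      exact OmegaAux.pairwise_patTrans (u (max k₁ k₂) n + τ (max k₁ k₂))
        ((hpp (max k₁ k₂) n).1.2.2.2) hka hkb hab
    · apply Set.eq_univ_of_forall
      intro x
      obtain ⟨k, hk⟩ := exists_nat_ge ‖x‖
      obtain ⟨n, hn1, hn2⟩ := hgoodn k
      have hx : x ∈ supp d (level k) := by
        rw [hlevel_eq k n hn1, OmegaAux.supp_patTrans]
        refine ⟨x - (u k n + τ k), ?_, by module⟩
        apply (hpp k n).2.1
        rw [mem_closedBall, dist_eq_norm, sub_zero]
        have he1 : u k n + τ k = -(v k n - τ k) := by simp only [hv]; module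
        have he2 : ‖v k n - τ k‖ < 1 := by rw [← dist_eq_norm]; exact hn2
        calc ‖x - (u k n + τ k)‖ ≤ ‖x‖ + ‖u k n + τ k‖ := norm_sub_le _ _
        _ = ‖x‖ + ‖v k n - τ k‖ := by rw [he1, norm_neg]
        _ ≤ (k:ℝ) + 1 := by linarith
      obtain ⟨m, hm, hxm⟩ := hx
      exact ⟨m, hlevel_sub_S k hm, hxm⟩
  have hSPs : ∀ M : Set (Set (Pt d)), IsPattern d M → M ⊆ S → M ∈ Ps := by
    intro M hM hMS
    have h1 : ∀ m, m ∈ M → ∃ k, m ∈ level k := fun m hm => Set.mem_iUnion.mp (hMS hm)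
    choose lv hlv using h1
    set g : Set (Pt d) → ℕ := fun m => if h : m ∈ M then lv m h else 0 with hgdef
    obtain ⟨Kb, hKb⟩ := (hM.1.image g).bddAbove
    have hKb2 : ∀ m (hm : m ∈ M), m ∈ level Kb := by
      intro m hm
      have h2 : g m ≤ Kb := hKb (Set.mem_image_of_mem g hm)
      have h3 : m ∈ level (g m) := by
        rw [hgdef]; simp only [dif_pos hm]; exact hlv m hm
      exact hchain' _ _ h2 h3
    obtain ⟨n, hn, -⟩ := hgoodn Kb
    have h2 : patTrans d (-(u Kb n + τ Kb)) M ⊆ patch Kb n := by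
      calc patTrans d (-(u Kb n + τ Kb)) M
          ⊆ patTrans d (-(u Kb n + τ Kb)) (level Kb) :=
            OmegaAux.patTrans_mono (fun m hm => hKb2 m hm)
      _ = patch Kb n := by
          rw [hlevel_eq Kb n hn, OmegaAux.patTrans_patTrans, add_neg_cancel,
            OmegaAux.patTrans_zero]
    have h3 : patTrans d (-(u Kb n + τ Kb)) M ∈ Ps :=
      hPat n _ (OmegaAux.isPattern_patTrans hM _) (h2.trans (hpatchTn Kb n))
    have h4 := hadm.transClosed (u Kb n + τ Kb) _ h3
    rwa [OmegaAux.patTrans_patTrans, neg_add_cancel, OmegaAux.patTrans_zero] at h4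
  -- the good subsequence
  have hGU : ∀ j : ℕ, ∀ᶠ n in (U : Filter ℕ),
      ∀ k ≤ j, cls k n = Cc k ∧ dist (v k n) (τ k) < 1/((j:ℝ)+1) := by
    intro j
    have h1 : ∀ k : ℕ, ∀ᶠ n in (U : Filter ℕ),
        cls k n = Cc k ∧ dist (v k n) (τ k) < 1/((j:ℝ)+1) := by
      intro k
      refine (hev1 k).and ?_
      have := (hτ k) (Metric.ball_mem_nhds (τ k)
        (show (0:ℝ) < 1/((j:ℝ)+1) by positivity))
      filter_upwards [this] with n hn using mem_ball.mp hn
    have h2 := (Filter.eventually_all_finite (Set.finite_Iic j)).mpr (fun k _ => h1 k)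
    exact h2.mono (fun n hn k hk => hn k hk)
  have hstep : ∀ j b : ℕ, ∃ n, (∀ k ≤ j, cls k n = Cc k ∧
      dist (v k n) (τ k) < 1/((j:ℝ)+1)) ∧ b < n := by
    intro j b
    have hin : {n | ∀ k ≤ j, cls k n = Cc k ∧ dist (v k n) (τ k) < 1/((j:ℝ)+1)}.Infinite :=
      hinf _ (Ultrafilter.mem_coe.mp (Filter.eventually_iff.mp (hGU j)))
    obtain ⟨n, hn, hbn⟩ := hin.exists_gt b
    exact ⟨n, hn, hbn⟩
  choose g2 hg1 hg2 using hstep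
  set φ : ℕ → ℕ := fun j => Nat.rec (g2 0 0) (fun j ih => g2 (j+1) ih) j with hφdef
  have hφmem : ∀ j, ∀ k ≤ j, cls k (φ j) = Cc k ∧
      dist (v k (φ j)) (τ k) < 1/((j:ℝ)+1) := by
    intro j
    cases j with
    | zero => exact hg1 0 0
    | succ j => exact hg1 (j+1) _
  have hφmono : StrictMono φ := strictMono_nat_of_lt_succ (fun j => hg2 (j+1) (φ j))
  refine ⟨S, ⟨hStiling, hSPs⟩, φ, hφmono, ?_⟩
  rw [Metric.tendsto_atTop]
  intro ε hε
  obtain ⟨kstar, hkstar⟩ := exists_nat_ge (1/(ε/2) + 2*(rmax+1))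
  obtain ⟨N₂, hN₂⟩ := exists_nat_gt (1/(ε/2))
  refine ⟨max kstar N₂, fun j hj => ?_⟩
  have hjk : kstar ≤ j := le_trans (le_max_left _ _) hj
  have hjN₂ : N₂ ≤ j := le_trans (le_max_right _ _) hj
  obtain ⟨hcls_j, hv_j⟩ := hφmem j kstar hjk
  set t : Pt d := v kstar (φ j) - τ kstar with htdef
  have hε2 : (0:ℝ) < ε/2 := by linarith
  have htnorm : ‖t‖ < ε/2 := by
    have h1 : ‖t‖ < 1/((j:ℝ)+1) := by rw [htdef, ← dist_eq_norm]; exact hv_j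
    have hN₂j : (N₂:ℝ) ≤ (j:ℝ) := Nat.cast_le.mpr hjN₂
    have h2 : 1/((j:ℝ)+1) ≤ 1/((N₂:ℝ)+1) :=
      one_div_le_one_div_of_le (by positivity) (by linarith)
    have h3 : 1/((N₂:ℝ)+1) < ε/2 := by
      rw [div_lt_iff₀ (by positivity)]
      have h4 : 1/(ε/2) < (N₂:ℝ) := hN₂
      have h5 : 1 < (ε/2) * (N₂:ℝ) := by
        rw [div_lt_iff₀ hε2] at h4
        linarith [h4]
      nlinarith [hε2]
    linarith
  have hPsub : patch kstar (φ j) ⊆ patTrans d t S := by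
    have ht_eq : -(u kstar (φ j) + τ kstar) = t := by
      rw [htdef]; simp only [hv]; module
    have h1 : patch kstar (φ j) = patTrans d t (level kstar) := by
      rw [hlevel_eq kstar (φ j) hcls_j, OmegaAux.patTrans_patTrans, ← ht_eq,
        add_neg_cancel, OmegaAux.patTrans_zero]
    rw [h1]
    exact OmegaAux.patTrans_mono (hlevel_sub_S kstar)
  have hYfacts : ∀ s ∈ patTrans d t S,
      (∃ z, closedBall z (rmin/2) ⊆ interior s) ∧ (∃ y, s ⊆ closedBall y (rmax+1)) := by
    rintro s ⟨s₁, hs₁, rfl⟩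
    obtain ⟨k, hk⟩ := Set.mem_iUnion.mp hs₁
    obtain ⟨n, hn, -⟩ := hgoodn k
    rw [hlevel_eq k n hn] at hk
    obtain ⟨m₁, hm₁, rfl⟩ := hk
    have himg : (fun x => x + t) '' ((fun x => x + (u k n + τ k)) '' m₁)
        = (fun x => x + (u k n + τ k + t)) '' m₁ := by
      rw [Set.image_image]
      apply Set.image_congr'
      intro x
      rw [add_assoc]
    beta_reduce
    rw [himg]
    have hm₁T : m₁ ∈ T n := hpatchTn k n hm₁
    have hPs' : ({(fun x => x + (u k n + τ k + t)) '' m₁} : Set (Set (Pt d))) ∈ Ps := by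
      have h5 := hadm.transClosed (u k n + τ k + t) _ (tile_Ps n m₁ hm₁T)
      have h6 : patTrans d (u k n + τ k + t) {m₁}
          = ({(fun x => x + (u k n + τ k + t)) '' m₁} : Set (Set (Pt d))) := by
        rw [patTrans, Set.image_singleton]
      rwa [h6] at h5
    have hTile' := OmegaAux.isTile_translate ((hTiling n).1 m₁ hm₁T) (u k n + τ k + t)
    have hb := htb _ hPs'
    exact OmegaAux.singleton_tile_facts hTile' hrmin hb.1 hb.2.2
  have hrestrict : patRestrict d (T (φ j)) (closedBall (0:Pt d) (1/(ε/2))) =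
      patRestrict d (patTrans d t S) (closedBall (0:Pt d) (1/(ε/2))) := by
    apply OmegaAux.restrict_eq (k := (kstar:ℝ)+1) (hTiling (φ j))
      (OmegaAux.isTiling_patTrans hStiling t)
      (by positivity : (0:ℝ) < rmin/2) (by linarith : (0:ℝ) < rmax+1)
      (by positivity : (0:ℝ) < 1/(ε/2)) (by push_cast; linarith)
      (fun s hs => (hYfacts s hs).1) (fun s hs => (hYfacts s hs).2)
    · simpa only [hpatchdef] using hPsub
    · simpa only [hpatchdef] using (hpp kstar (φ j)).1.1
  have hmem2 : (ε/2) ∈ {ε' : ℝ | 0 < ε' ∧ ∃ t' : Pt d, ‖t'‖ ≤ ε' ∧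
      patRestrict d (T (φ j)) (closedBall (0:Pt d) (1/ε')) =
      patRestrict d (patTrans d t' (S)) (closedBall (0:Pt d) (1/ε'))} :=
    ⟨hε2, t, htnorm.le, hrestrict⟩
  have h5 : tdist d (T (φ j)) S ≤ ε/2 := csInf_le ⟨0, fun x hx => hx.1.le⟩ hmem2
  have h6 : 0 ≤ tdist d (T (φ j)) S := Real.sInf_nonneg (fun x hx => hx.1.le)
  rw [Real.dist_eq, sub_zero, abs_of_nonneg h6]
  linarith

end
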